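/- arXiv:1110.1546 — 2 statements merged into one kernel-verified Lean document; each statement's English description precedes it below -/
import Mathlib

section
/- For x = c_1 e_1 + c_2 e_2 + c_3 e_3 + c_4 e_4 in K[Z_4], x satisfies the polynomial equation x^4 - q_1(x) x^3 + q_2(x) x^2 - q_3(x) x + q_4(x)·1 = 0, where q_1(x) = 4c_1, q_2(x) = 6c_1^2 - 4c_2 c_4 - 2c_3^2, q_3(x) = 4c_1^3 - 8c_1 c_2 c_4 - 4c_1 c_3^2 + 4c_2^2 c_3 + 4c_3 c_4^2, and q_4(x) = c_1^4 - c_2^4 + c_3^4 - c_4^4 - 2c_1^2 c_3^2 - 4c_1^2 c_2 c_4 + 4c_1 c_2^2 c_3 + 4c_1 c_3 c_4^2 + 2c_2^2 c_4^2 - 4c_2 c_3^2 c_4. -/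
open scoped BigOperators

/-- In `K[Z_4]`, `x = c₁e₁ + c₂e₂ + c₃e₃ + c₄e₄` satisfies
`x⁴ - q₁(x)x³ + q₂(x)x² - q₃(x)x + q₄(x)·1 = 0` with the forms given explicitly. -/
theorem stmt6 (K : Type*) [Field K] [CharZero K] (c1 c2 c3 c4 : K) :
    (c1 • AddMonoidAlgebra.single (0 : ZMod 4) (1 : K) +
     c2 • AddMonoidAlgebra.single (1 : ZMod 4) (1 : K) +
     c3 • AddMonoidAlgebra.single (2 : ZMod 4) (1 : K) +
     c4 • AddMonoidAlgebra.single (3 : ZMod 4) (1 : K)) ^ 4 -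
    (4 * c1) • (c1 • AddMonoidAlgebra.single (0 : ZMod 4) (1 : K) +
     c2 • AddMonoidAlgebra.single (1 : ZMod 4) (1 : K) +
     c3 • AddMonoidAlgebra.single (2 : ZMod 4) (1 : K) +
     c4 • AddMonoidAlgebra.single (3 : ZMod 4) (1 : K)) ^ 3 +
    (6 * c1 ^ 2 - 4 * c2 * c4 - 2 * c3 ^ 2) •
      (c1 • AddMonoidAlgebra.single (0 : ZMod 4) (1 : K) +
     c2 • AddMonoidAlgebra.single (1 : ZMod 4) (1 : K) +
     c3 • AddMonoidAlgebra.single (2 : ZMod 4) (1 : K) +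
     c4 • AddMonoidAlgebra.single (3 : ZMod 4) (1 : K)) ^ 2 -
    (4 * c1 ^ 3 - 8 * c1 * c2 * c4 - 4 * c1 * c3 ^ 2 + 4 * c2 ^ 2 * c3 + 4 * c3 * c4 ^ 2) •
      (c1 • AddMonoidAlgebra.single (0 : ZMod 4) (1 : K) +
     c2 • AddMonoidAlgebra.single (1 : ZMod 4) (1 : K) +
     c3 • AddMonoidAlgebra.single (2 : ZMod 4) (1 : K) +
     c4 • AddMonoidAlgebra.single (3 : ZMod 4) (1 : K)) +
    (c1 ^ 4 - c2 ^ 4 + c3 ^ 4 - c4 ^ 4 - 2 * c1 ^ 2 * c3 ^ 2 - 4 * c1 ^ 2 * c2 * c4 +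
      4 * c1 * c2 ^ 2 * c3 + 4 * c1 * c3 * c4 ^ 2 + 2 * c2 ^ 2 * c4 ^ 2 -
      4 * c2 * c3 ^ 2 * c4) • (1 : AddMonoidAlgebra K (ZMod 4)) = 0 := by

  have h0 : AddMonoidAlgebra.single (0 : ZMod 4) (1 : K) = 1 := rfl
  set g : AddMonoidAlgebra K (ZMod 4) := AddMonoidAlgebra.single (1 : ZMod 4) (1 : K) with hgdef
  have h2 : AddMonoidAlgebra.single (2 : ZMod 4) (1 : K) = g ^ 2 := by
    rw [hgdef, sq, AddMonoidAlgebra.single_mul_single]; norm_num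
  have h3 : AddMonoidAlgebra.single (3 : ZMod 4) (1 : K) = g ^ 3 := by
    rw [hgdef, pow_succ, sq, AddMonoidAlgebra.single_mul_single,
      AddMonoidAlgebra.single_mul_single]; norm_num
  have hg : g ^ 4 = 1 := by
    rw [hgdef, show (4:ℕ) = 2 + 2 by norm_num, pow_add, sq,
      AddMonoidAlgebra.single_mul_single, AddMonoidAlgebra.single_mul_single]
    norm_num
    rfl
  rw [h0, h2, h3]
  simp only [Algebra.smul_def, map_mul, map_add, map_sub, map_pow, map_ofNat, map_one]
  set A := algebraMap K (AddMonoidAlgebra K (ZMod 4)) with hA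
  linear_combination
    ((A c4 ^ 4 - A c3 ^ 4 + 4 * A c2 * A c3 ^ 2 * A c4 - 2 * A c2 ^ 2 * A c4 ^ 2 + A c2 ^ 4)
     + (4 * A c2 * A c3 * A c4 ^ 2 + 4 * A c2 ^ 3 * A c3) * g
     + (4 * A c3 ^ 2 * A c4 ^ 2 + 6 * A c2 ^ 2 * A c3 ^ 2 + 4 * A c2 ^ 3 * A c4) * g ^ 2
     + (4 * A c3 * A c4 ^ 3 + 4 * A c2 * A c3 ^ 3 + 12 * A c2 ^ 2 * A c3 * A c4) * g ^ 3
     + (A c4 ^ 4 + A c3 ^ 4 + 12 * A c2 * A c3 ^ 2 * A c4 + 6 * A c2 ^ 2 * A c4 ^ 2) * g ^ 4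
     + (4 * A c3 ^ 3 * A c4 + 12 * A c2 * A c3 * A c4 ^ 2) * g ^ 5
     + (6 * A c3 ^ 2 * A c4 ^ 2 + 4 * A c2 * A c4 ^ 3) * g ^ 6
     + (4 * A c3 * A c4 ^ 3) * g ^ 7
     + A c4 ^ 4 * g ^ 8) * hg
end

section
/- With the transferred Hopf structure on C^n_ℂ, for a circulant matrix C = circ(c_1,...,c_n), the comultiplication Δ(C) = Σ_{k=1}^n c_k P_n^{k-1} ⊗ P_n^{k-1}, regarded as an n²×n² matrix via the Kronecker product, equals the block circulant with circulant blocks circ(c_1 I_n, c_2 P_n, ..., c_n P_n^{n-1}); moreover the eigenvalues of Δ(C) are exactly the eigenvalues of C, each with multiplicity n. -/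
open scoped BigOperators Kronecker

open Complex Matrix Polynomial

def circ {n : ℕ} (c : ZMod n → ℂ) : Matrix (ZMod n) (ZMod n) ℂ :=
  Matrix.of fun i j => c (j - i)

/-- The fundamental circulant `P_n`. -/
def P (n : ℕ) : Matrix (ZMod n) (ZMod n) ℂ :=
  circ (fun k => if k = 1 then 1 else 0)

/-- The comultiplication of `C = circ c` transferred from `Δ(e_k) = e_k ⊗ e_k`:
`Δ(C) = Σ_k c_k P^{k-1} ⊗ P^{k-1}`, as an `n²×n²` matrix via the Kronecker product. -/
noncomputable def DeltaC {n : ℕ} [NeZero n] (c : ZMod n → ℂ) :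
    Matrix (ZMod n × ZMod n) (ZMod n × ZMod n) ℂ :=
  ∑ k : ZMod n, c k • ((P n ^ k.val) ⊗ₖ (P n ^ k.val))

section Aux

variable {n : ℕ} [NeZero n]

lemma cast_val' (k : ZMod n) : ((k.val : ℕ) : ZMod n) = k :=
  ZMod.natCast_rightInverse k

lemma Ppow_apply (m : ℕ) : ∀ i j : ZMod n,
    (P n ^ m) i j = if j = i + (m : ZMod n) then 1 else 0 := by
  induction m with
  | zero => intro i j; simp [Matrix.one_apply, eq_comm]
  | succ m ih =>
    intro i j
    rw [pow_succ, Matrix.mul_apply]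
    simp only [ih]
    simp only [P, circ, Matrix.of_apply, ite_mul, one_mul, zero_mul]
    rw [Finset.sum_ite_eq' Finset.univ (i + (m : ZMod n))
      (fun x => if j - x = 1 then (1 : ℂ) else 0)]
    simp only [Finset.mem_univ, if_true]
    push_cast
    refine if_congr ?_ rfl rfl
    constructor
    · intro h; linear_combination h
    · intro h; linear_combination h

lemma DeltaC_apply (c : ZMod n → ℂ) (p q : ZMod n × ZMod n) :
    DeltaC c p q = c (q.1 - p.1) * if q.2 = p.2 + (q.1 - p.1) then 1 else 0 := by
  unfold DeltaC
  rw [Matrix.sum_apply]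
  have h1 : ∀ k : ZMod n,
      (c k • ((P n ^ k.val) ⊗ₖ (P n ^ k.val))) p q
        = if k = q.1 - p.1 then
            c k * if q.2 = p.2 + k then (1 : ℂ) else 0 else 0 := by
    intro k
    rw [Matrix.smul_apply, Matrix.kroneckerMap_apply, Ppow_apply, Ppow_apply, cast_val',
      smul_eq_mul]
    by_cases h : k = q.1 - p.1
    · subst h
      rw [if_pos rfl, if_pos (by ring), one_mul]
    · rw [if_neg ?_, if_neg h, zero_mul, mul_zero]
      intro hc; exact h (by linear_combination -hc)
  rw [Finset.sum_congr rfl (fun k _ => h1 k),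
    Finset.sum_ite_eq' Finset.univ (q.1 - p.1)
      (fun k => c k * if q.2 = p.2 + k then (1 : ℂ) else 0)]
  simp

/-- The shear equivalence used to turn `Δ(C)` into a Kronecker product. -/
def shear (n : ℕ) [NeZero n] : (ZMod n × ZMod n) ≃ (ZMod n × ZMod n) where
  toFun p := (p.1, p.2 - p.1)
  invFun p := (p.1, p.2 + p.1)
  left_inv p := by simp
  right_inv p := by simp

lemma DeltaC_eq_submatrix (c : ZMod n → ℂ) :
    DeltaC c = (circ c ⊗ₖ (1 : Matrix (ZMod n) (ZMod n) ℂ)).submatrix (shear n) (shear n) := by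
  ext p q
  rw [Matrix.submatrix_apply, DeltaC_apply]
  simp only [shear, Equiv.coe_fn_mk, Matrix.kroneckerMap_apply, circ, Matrix.of_apply,
    Matrix.one_apply]
  refine congrArg (c (q.1 - p.1) * ·) (if_congr ?_ rfl rfl)
  constructor
  · intro h; linear_combination -h
  · intro h; linear_combination -h

lemma charmatrix_kronecker_one (A : Matrix (ZMod n) (ZMod n) ℂ) :
    charmatrix (A ⊗ₖ (1 : Matrix (ZMod n) (ZMod n) ℂ))
      = (charmatrix A) ⊗ₖ (1 : Matrix (ZMod n) (ZMod n) ℂ[X]) := by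
  ext ⟨i, k⟩ ⟨j, l⟩
  rw [charmatrix_apply, Matrix.kroneckerMap_apply, Matrix.kroneckerMap_apply, charmatrix_apply]
  by_cases hkl : k = l
  · subst hkl
    by_cases hij : i = j
    · subst hij
      simp [Matrix.diagonal_apply, Matrix.one_apply]
    · simp [Matrix.diagonal_apply, Matrix.one_apply, hij, Prod.ext_iff]
  · simp [Matrix.diagonal_apply, Matrix.one_apply, hkl, Prod.ext_iff]

lemma charpoly_kronecker_one (A : Matrix (ZMod n) (ZMod n) ℂ) :
    (A ⊗ₖ (1 : Matrix (ZMod n) (ZMod n) ℂ)).charpoly = A.charpoly ^ n := by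
  show (charmatrix _).det = _
  rw [charmatrix_kronecker_one, Matrix.det_kronecker, Matrix.det_one, one_pow, mul_one,
    ZMod.card]
  rfl

lemma sum_pow_val (u : ℂ) (hu : u ^ n = 1) :
    (∑ i : ZMod n, u ^ i.val) = if u = 1 then (n : ℂ) else 0 := by
  have hrange : (∑ i : ZMod n, u ^ i.val) = ∑ i ∈ Finset.range n, u ^ i := by
    refine Finset.sum_bij' (fun (a : ZMod n) _ => a.val)
      (fun (a : ℕ) ha => (a : ZMod n)) ?_ ?_ ?_ ?_ ?_
    · intro a _; exact Finset.mem_range.mpr (ZMod.val_lt a)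
    · intro a _; exact Finset.mem_univ _
    · intro a _; exact cast_val' a
    · intro a ha; exact ZMod.val_cast_of_lt (Finset.mem_range.mp ha)
    · intro a _; rfl
  rw [hrange]
  by_cases h1 : u = 1
  · simp [h1]
  · rw [if_neg h1, geom_sum_eq h1, hu, sub_self, zero_div]

lemma circ_charpoly (c : ZMod n → ℂ) :
    (circ c).charpoly = ∏ j : ZMod n,
      (X - C (∑ k : ZMod n, c k * Complex.exp (2 * Real.pi * I / n) ^ (k.val * j.val))) := by
  set ζ : ℂ := Complex.exp (2 * Real.pi * I / n) with hζdef
  have hζ : IsPrimitiveRoot ζ n := Complex.isPrimitiveRoot_exp n (NeZero.ne n)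
  have hζn : ζ ^ n = 1 := hζ.pow_eq_one
  have hζ0 : ζ ≠ 0 := Complex.exp_ne_zero _
  have hmod : ∀ a : ℕ, ζ ^ a = ζ ^ (a % n) := by
    intro a
    conv_lhs => rw [← Nat.div_add_mod a n]
    rw [pow_add, pow_mul, hζn, one_pow, one_mul]
  have hpowpow : ∀ a : ℕ, (ζ ^ a) ^ n = 1 := by
    intro a; rw [← pow_mul, Nat.mul_comm, pow_mul, hζn, one_pow]
  set F : Matrix (ZMod n) (ZMod n) ℂ := Matrix.of fun i j => ζ ^ (i.val * j.val) with hF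
  set Fi : Matrix (ZMod n) (ZMod n) ℂ :=
    Matrix.of fun i j => (n : ℂ)⁻¹ * (ζ ^ (i.val * j.val))⁻¹ with hFi
  set lam : ZMod n → ℂ := fun j => ∑ k : ZMod n, c k * ζ ^ (k.val * j.val) with hlam
  have hncast : (n : ℂ) ≠ 0 := Nat.cast_ne_zero.mpr (NeZero.ne n)
  -- F * Fi = 1
  have hFFi : F * Fi = 1 := by
    ext i j
    rw [Matrix.mul_apply]
    have hterm : ∀ m : ZMod n, F i m * Fi m j
        = (n : ℂ)⁻¹ * (ζ ^ i.val * (ζ ^ j.val)⁻¹) ^ m.val := by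
      intro m
      rw [hF, hFi]
      simp only [Matrix.of_apply]
      rw [mul_pow, inv_pow, ← pow_mul, ← pow_mul, Nat.mul_comm j.val m.val]
      ring
    rw [Finset.sum_congr rfl (fun m _ => hterm m), ← Finset.mul_sum,
      sum_pow_val _ (by rw [mul_pow, inv_pow, hpowpow, hpowpow, inv_one, mul_one])]
    have hcond : (ζ ^ i.val * (ζ ^ j.val)⁻¹ = 1) ↔ i = j := by
      rw [mul_inv_eq_one₀ (pow_ne_zero _ hζ0)]
      constructor
      · intro h
        exact ZMod.val_injective n (hζ.pow_inj (ZMod.val_lt i) (ZMod.val_lt j) h)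
      · rintro rfl; rfl
    by_cases hij : i = j
    · rw [if_pos (hcond.mpr hij), hij, Matrix.one_apply_eq, inv_mul_cancel₀ hncast]
    · rw [if_neg (fun h => hij (hcond.mp h)), Matrix.one_apply_ne hij, mul_zero]
  -- circ c * F = F * diagonal lam
  have hCF : circ c * F = F * Matrix.diagonal lam := by
    ext i j
    rw [Matrix.mul_apply, Matrix.mul_diagonal]
    have hz : ∀ a b : ZMod n, ζ ^ ((a + b).val * j.val)
        = ζ ^ (a.val * j.val) * ζ ^ (b.val * j.val) := by
      intro a b
      rw [← pow_add, ZMod.val_add, hmod (((a.val + b.val) % n) * j.val),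
        ((Nat.mod_modEq (a.val + b.val) n).mul_right j.val : _ % n = _ % n),
        ← hmod, add_mul]
    calc ∑ m : ZMod n, circ c i m * F m j
        = ∑ k : ZMod n, circ c i (i + k) * F (i + k) j :=
          (Equiv.sum_comp (Equiv.addLeft i) (fun m => circ c i m * F m j)).symm
      _ = F i j * lam j := by
          rw [hF, hlam, Finset.mul_sum]
          refine Finset.sum_congr rfl fun k _ => ?_
          simp only [circ, Matrix.of_apply, add_sub_cancel_left]
          rw [hz i k]
          ring
  have hdet1 : (F.map (C : ℂ →+* ℂ[X])).det * (Fi.map (C : ℂ →+* ℂ[X])).det = 1 := by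
    rw [← Matrix.det_mul, ← Matrix.map_mul, hFFi,
      Matrix.map_one _ (map_zero _) (map_one _), Matrix.det_one]
  have hFdet0 : (F.map (C : ℂ →+* ℂ[X])).det ≠ 0 := left_ne_zero_of_mul_eq_one hdet1
  have hcomm : charmatrix (circ c) * F.map (C : ℂ →+* ℂ[X])
      = F.map (C : ℂ →+* ℂ[X]) * charmatrix (Matrix.diagonal lam) := by
    simp only [charmatrix]
    rw [Matrix.sub_mul, Matrix.mul_sub]
    congr 1
    · exact (Matrix.scalar_commute (X : ℂ[X]) (fun r => Commute.all _ r)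
        (F.map (C : ℂ →+* ℂ[X]))).eq
    · simp only [RingHom.mapMatrix_apply]
      rw [← Matrix.map_mul, hCF, Matrix.map_mul]
  have hdets := congrArg Matrix.det hcomm
  rw [Matrix.det_mul, Matrix.det_mul] at hdets
  have hcp : (circ c).charpoly = (Matrix.diagonal lam).charpoly :=
    mul_right_cancel₀ hFdet0 (hdets.trans (mul_comm _ _))
  have hcm : charmatrix (Matrix.diagonal lam)
      = Matrix.diagonal (fun j => (X : ℂ[X]) - C (lam j)) := by
    ext i j
    by_cases h : i = j
    · subst h; simp
    · simp [h, Matrix.diagonal_apply_ne _ h]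
  have hdiag : (Matrix.diagonal lam).charpoly = ∏ j : ZMod n, ((X : ℂ[X]) - C (lam j)) := by
    show (charmatrix _).det = _
    rw [hcm, Matrix.det_diagonal]
  rw [hcp, hdiag]

end Aux

/-- `Δ(C)` is the block circulant with circulant blocks `circ(c₁I, c₂P, ..., c_nP^{n-1})`,
and its eigenvalues are those of `C`, each with multiplicity `n`: its characteristic
polynomial is `∏_j (X - λ_j)^n` where `λ_j = p_C(ω^{j-1})`. -/
theorem stmt17 (n : ℕ) [NeZero n] (c : ZMod n → ℂ) :
    DeltaC c = Matrix.of
      (fun p q : ZMod n × ZMod n => (c (q.1 - p.1) • P n ^ (q.1 - p.1).val) p.2 q.2) ∧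
    (DeltaC c).charpoly = ∏ j : ZMod n,
      (X - C (∑ k : ZMod n, c k * Complex.exp (2 * Real.pi * I / n) ^ (k.val * j.val))) ^ n := by
  constructor
  · ext p q
    rw [Matrix.of_apply, DeltaC_apply, Matrix.smul_apply, Ppow_apply, cast_val', smul_eq_mul]
  · rw [DeltaC_eq_submatrix]
    have hre : (circ c ⊗ₖ (1 : Matrix (ZMod n) (ZMod n) ℂ)).submatrix (shear n) (shear n)
        = Matrix.reindex (shear n).symm (shear n).symm (circ c ⊗ₖ 1) := by
      rw [Matrix.reindex_apply, Equiv.symm_symm]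
    rw [hre, Matrix.charpoly_reindex, charpoly_kronecker_one, circ_charpoly,
      ← Finset.prod_pow]
end
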